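/- Let b > 1 and let ψ : [0,b] → [0,∞) be a continuous nondecreasing function with ψ(0) = 0 and ψ(u) > 0 for u > 0, which is operator monotone on [0,b]. Then for every a ∈ (0,b) there exists a constant c'_ψ > 0 such that for all λ, σ with 0 < λ < σ ≤ a, c'_ψ·λ/ψ(λ) ≤ σ/ψ(σ). -/

import Mathlib

set_option maxHeartbeats 2000000

/-- The complex Hilbert space `ℓ²(ℕ)`. -/
noncomputable abbrev ellTwo : Type := lp (fun _ : ℕ => ℂ) 2

/-- A continuous function `ψ : [0,b] → [0,∞)` is operator monotone on `[0,b]` if for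
every pair `U, V` of bounded operators on `ℓ²(ℕ)` with `0 ≤ U ≤ V` (Loewner order)
and `‖V‖ ≤ b`, one has `ψ(U) ≤ ψ(V)` (via the continuous functional calculus). -/
def OperatorMonotoneOn (ψ : ℝ → ℝ) (b : ℝ) : Prop :=
  ∀ U V : ellTwo →L[ℂ] ellTwo, U.IsPositive → (V - U).IsPositive → ‖V‖ ≤ b →
    (cfc (instCFC := IsSelfAdjoint.instContinuousFunctionalCalculus) ψ V -
      cfc (instCFC := IsSelfAdjoint.instContinuousFunctionalCalculus) ψ U).IsPositive

noncomputable instance ellTwoCFC :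
    ContinuousFunctionalCalculus ℝ (ellTwo →L[ℂ] ellTwo) IsSelfAdjoint :=
  IsSelfAdjoint.instContinuousFunctionalCalculus

/-! ### Auxiliary constructions -/

lemma ellTwo_real_smul (r : ℝ) (y : ellTwo) : r • y = (r : ℂ) • y :=
  RCLike.real_smul_eq_coe_smul r y

/-- The rank-one operator `x ↦ ⟪v, x⟫ • v`. -/
noncomputable def rk (v : ellTwo) : ellTwo →L[ℂ] ellTwo := (innerSL ℂ v).smulRight v

lemma rk_apply (v x : ellTwo) : rk v x = (inner ℂ v x : ℂ) • v := rfl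

lemma rk_sa (v : ellTwo) : IsSelfAdjoint (rk v) := by
  rw [ContinuousLinearMap.isSelfAdjoint_iff_isSymmetric]
  intro x y
  simp only [ContinuousLinearMap.coe_coe, rk_apply, inner_smul_left, inner_smul_right]
  rw [← inner_conj_symm x v]
  ring

lemma sa_smul (c : ℝ) (T : ellTwo →L[ℂ] ellTwo) (h : IsSelfAdjoint T) :
    IsSelfAdjoint (c • T) := by
  rw [ContinuousLinearMap.isSelfAdjoint_iff_isSymmetric] at h ⊢
  intro x y
  exact (inner_smul_real_left _ _ _).trans
    ((congrArg (c • ·) (h x y)).trans (inner_smul_real_right _ _ _).symm)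

lemma rk_mul (v : ellTwo) (hv : (inner ℂ v v : ℂ) = 1) : rk v * rk v = rk v := by
  have hn : ((‖v‖ : ℝ) : ℂ) ^ 2 = 1 := by
    have h := inner_self_eq_norm_sq_to_K (𝕜 := ℂ) v
    rw [hv] at h
    exact h.symm
  ext x
  simp [ContinuousLinearMap.mul_apply, rk_apply, inner_smul_right, hv, mul_comm, hn]

lemma inner_rk_self (v x : ellTwo) :
    (inner ℂ (rk v x) x : ℂ) = (Complex.normSq (inner ℂ v x : ℂ) : ℂ) := by
  rw [rk_apply, inner_smul_left, Complex.normSq_eq_conj_mul_self]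

lemma norm_rk_le_one (v : ellTwo) (hv : ‖v‖ = 1) : ‖rk v‖ ≤ 1 := by
  refine ContinuousLinearMap.opNorm_le_bound _ zero_le_one fun x => ?_
  rw [rk_apply, norm_smul, hv, mul_one, one_mul]
  simpa [hv] using norm_inner_le_norm (𝕜 := ℂ) v x

/-- The standard basis vectors of `ℓ²(ℕ)`. -/
noncomputable def esingle (i : ℕ) : ellTwo := lp.single 2 i 1

lemma inner_esingle_left (i : ℕ) (x : ellTwo) :
    (inner ℂ (esingle i) x : ℂ) = x i := by
  rw [esingle, lp.inner_single_left]; simp [inner]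

lemma esingle_apply (i j : ℕ) : (esingle i) j = if j = i then 1 else 0 := by
  rw [esingle, lp.single_apply]
  by_cases h : j = i <;> simp [h]

lemma inner_esingle_esingle (i j : ℕ) :
    (inner ℂ (esingle i) (esingle j) : ℂ) = if i = j then 1 else 0 := by
  rw [inner_esingle_left, esingle_apply]

lemma orthonormal_esingle : Orthonormal ℂ esingle := by
  rw [orthonormal_iff_ite]
  intro i j
  rw [inner_esingle_esingle]

lemma norm_esingle (i : ℕ) : ‖esingle i‖ = 1 := by
  have h1 : (inner ℂ (esingle i) (esingle i) : ℂ) = 1 := by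
    rw [inner_esingle_esingle]; simp
  have h := norm_eq_sqrt_re_inner (𝕜 := ℂ) (esingle i)
  rw [h1] at h
  simpa using h

instance : Nontrivial (ellTwo →L[ℂ] ellTwo) := by
  refine ⟨1, 0, fun h => ?_⟩
  have h0 := norm_esingle 0
  have := congrArg (fun T : ellTwo →L[ℂ] ellTwo => T (esingle 0)) h
  simp only [ContinuousLinearMap.one_apply, ContinuousLinearMap.zero_apply] at this
  rw [this] at h0
  simp at h0

lemma spec_quad (r s : ℝ) (T : ellTwo →L[ℂ] ellTwo)
    (h : T*T - (r+s)•T + (r*s)•(1 : ellTwo →L[ℂ] ellTwo) = 0) :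
    spectrum ℝ T ⊆ {r, s} := by
  intro μ hμ
  have key := spectrum.subset_polynomial_aeval T
    ((Polynomial.X - Polynomial.C r) * (Polynomial.X - Polynomial.C s))
  have haev : Polynomial.aeval T ((Polynomial.X - Polynomial.C r) * (Polynomial.X - Polynomial.C s))
      = T*T - (r+s)•T + (r*s)•(1 : ellTwo →L[ℂ] ellTwo) := by
    simp [mul_sub, sub_mul, Algebra.algebraMap_eq_smul_one, smul_smul, add_smul, smul_sub]
    rw [mul_comm s r]
    abel
  have hmem : ((μ - r) * (μ - s)) ∈ spectrum ℝ (Polynomial.aeval T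
      ((Polynomial.X - Polynomial.C r) * (Polynomial.X - Polynomial.C s))) := by
    apply key
    exact ⟨μ, hμ, by simp⟩
  rw [haev, h, spectrum.zero_eq] at hmem
  have h0 : (μ - r) * (μ - s) = 0 := hmem
  rcases mul_eq_zero.mp h0 with h1 | h1
  · left; linarith
  · right; show μ = s; linarith

/-- positivity of a nonnegative multiple of a rank-one projection -/
lemma rk_smul_pos (v : ellTwo) (c : ℝ) (hc : 0 ≤ c) :
    (c • rk v).IsPositive := by
  refine ⟨(sa_smul c _ (rk_sa v)).isSymmetric, fun x => ?_⟩
  have h2 : (inner ℂ ((c • rk v) x) x : ℂ) = ((c * Complex.normSq (inner ℂ v x : ℂ) : ℝ) : ℂ) := by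
    have e1 : ((c • rk v) x) = c • (rk v x) := rfl
    rw [e1, ellTwo_real_smul, inner_smul_left, Complex.conj_ofReal, inner_rk_self,
      ← Complex.ofReal_mul]
  rw [ContinuousLinearMap.reApplyInnerSelf_apply, h2]
  norm_cast
  exact mul_nonneg hc (Complex.normSq_nonneg _)

/-- for an operator monotone function `ψ` on `[0,b]` with `ψ(0) = 0`,
`ψ > 0` on `(0,b]`, and every `a ∈ (0,b)`, there is a constant `c'_ψ > 0` with
`c'_ψ·λ/ψ(λ) ≤ σ/ψ(σ)` whenever `0 < λ < σ ≤ a`. -/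
theorem stmt_7 (b : ℝ) (hb : 1 < b) (ψ : ℝ → ℝ)
    (hcont : ContinuousOn ψ (Set.Icc 0 b))
    (hmono : MonotoneOn ψ (Set.Icc 0 b))
    (hnonneg : ∀ u ∈ Set.Icc (0 : ℝ) b, 0 ≤ ψ u)
    (hψ0 : ψ 0 = 0)
    (hψpos : ∀ u, 0 < u → u ≤ b → 0 < ψ u)
    (hopmono : OperatorMonotoneOn ψ b)
    (a : ℝ) (ha : a ∈ Set.Ioo (0 : ℝ) b) :
    ∃ c' : ℝ, 0 < c' ∧ ∀ lam σ : ℝ, 0 < lam → lam < σ → σ ≤ a →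
      c' * lam / ψ lam ≤ σ / ψ σ := by
  obtain ⟨ha0, hab⟩ := ha
  set ε : ℝ := (b - a) / b with hε_def
  have hb0 : (0:ℝ) < b := by linarith
  have hε0 : 0 < ε := div_pos (by linarith) hb0
  have hε1 : ε < 1 := by rw [hε_def, div_lt_one hb0]; linarith
  have h1ε : 1 - ε = a / b := by rw [hε_def]; field_simp; ring
  have h1ε0 : 0 < 1 - ε := by linarith
  refine ⟨ε, hε0, fun lam σ hlam hlamσ hσa => ?_⟩
  have hσ0 : 0 < σ := lt_trans hlam hlamσ
  have hσb : σ < b := lt_of_le_of_lt hσa hab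
  have hlamb : lam < b := lt_trans hlamσ hσb
  -- parameters
  set t : ℝ := 1 - ε * lam / σ with ht_def
  have h1t : 1 - t = ε * lam / σ := by ring
  have h1t0 : 0 < 1 - t := by rw [h1t]; positivity
  have h1tε : 1 - t < ε := by
    rw [h1t, div_lt_iff₀ hσ0]
    nlinarith
  have ht0 : 0 < t := by linarith
  have ht1 : t < 1 := by linarith
  set d1 : ℝ := σ * t / (1 - ε) with hd1_def
  have hd1σ : σ < d1 := by
    rw [hd1_def, lt_div_iff₀ h1ε0]
    nlinarith
  have hd1b : d1 ≤ b := by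
    rw [hd1_def, div_le_iff₀ h1ε0, h1ε]
    have hba : b * (a / b) = a := by field_simp
    rw [hba]
    nlinarith
  have hd1lam : lam < d1 := lt_trans hlamσ hd1σ
  set τ : ℝ := Real.sqrt t with hτ_def
  set u : ℝ := Real.sqrt (1 - t) with hu_def
  have hτ0 : 0 < τ := Real.sqrt_pos.mpr ht0
  have hu0 : 0 < u := Real.sqrt_pos.mpr h1t0
  have hτ2 : τ ^ 2 = t := Real.sq_sqrt ht0.le
  have hu2 : u ^ 2 = 1 - t := Real.sq_sqrt h1t0.le
  -- the vectors and operators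
  set e0 : ellTwo := esingle 0 with he0
  set e1 : ellTwo := esingle 1 with he1
  set v : ellTwo := (τ : ℂ) • e0 + (u : ℂ) • e1 with hv_def
  have he00 : (inner ℂ e0 e0 : ℂ) = 1 := by rw [he0, inner_esingle_esingle]; simp
  have he01 : (inner ℂ e0 e1 : ℂ) = 0 := by rw [he0, he1, inner_esingle_esingle]; simp
  have he10 : (inner ℂ e1 e0 : ℂ) = 0 := by rw [he0, he1, inner_esingle_esingle]; simp
  have he11 : (inner ℂ e1 e1 : ℂ) = 1 := by rw [he1, inner_esingle_esingle]; simp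
  have hvv : (inner ℂ v v : ℂ) = 1 := by
    rw [hv_def]
    simp only [inner_add_left, inner_add_right, inner_smul_left, inner_smul_right,
      he00, he01, he10, he11, Complex.conj_ofReal, mul_zero, mul_one, zero_add, add_zero]
    norm_cast
    nlinarith [hτ2, hu2]
  have hv1 : ‖v‖ = 1 := by
    have h := norm_eq_sqrt_re_inner (𝕜 := ℂ) v
    rw [hvv] at h
    simpa using h
  have hve1 : (inner ℂ v e1 : ℂ) = (u : ℂ) := by
    rw [hv_def, inner_add_left, inner_smul_left, inner_smul_left, Complex.conj_ofReal,
      Complex.conj_ofReal, he01, he11]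
    ring
  set P : ellTwo →L[ℂ] ellTwo := rk v with hP
  set Q : ellTwo →L[ℂ] ellTwo := rk e0 with hQ
  set U : ellTwo →L[ℂ] ellTwo := σ • P with hU
  set V : ellTwo →L[ℂ] ellTwo := lam • (1 : ellTwo →L[ℂ] ellTwo) + (d1 - lam) • Q with hV
  have hPP : P * P = P := rk_mul v hvv
  have hQQ : Q * Q = Q := rk_mul e0 he00
  have hUsa : IsSelfAdjoint U := sa_smul σ P (rk_sa v)
  have hVsa : IsSelfAdjoint V :=
    (sa_smul lam 1 (IsSelfAdjoint.one _)).add (sa_smul (d1 - lam) Q (rk_sa e0))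
  -- positivity of U
  have hUpos : U.IsPositive := rk_smul_pos v σ hσ0.le
  -- positivity of V - U
  have hVUpos : (V - U).IsPositive := by
    refine ⟨(hVsa.sub hUsa).isSymmetric, fun x => ?_⟩
    have hx_split : (V - U) x = lam • x + (d1 - lam) • (Q x) - σ • (P x) := by
      simp [hV, hU, ContinuousLinearMap.sub_apply, ContinuousLinearMap.add_apply]
    set p : ℂ := inner ℂ e0 x with hp
    set q : ℂ := inner ℂ e1 x with hq
    set w : ℂ := inner ℂ v x with hw
    have hxx : (inner ℂ x x : ℂ) = ((‖x‖^2 : ℝ) : ℂ) := by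
      rw [inner_self_eq_norm_sq_to_K]; norm_cast
    have hinner : (inner ℂ (lam • x + (d1 - lam) • (Q x) - σ • (P x)) x : ℂ)
        = ((lam * ‖x‖^2 + (d1 - lam) * Complex.normSq p - σ * Complex.normSq w : ℝ) : ℂ) := by
      rw [hP, hQ, inner_sub_left, inner_add_left, ellTwo_real_smul, ellTwo_real_smul,
        ellTwo_real_smul, inner_smul_left, inner_smul_left, inner_smul_left,
        Complex.conj_ofReal, Complex.conj_ofReal, Complex.conj_ofReal,
        inner_rk_self, inner_rk_self, hxx, ← hp, ← hw]
      push_cast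
      ring
    rw [ContinuousLinearMap.reApplyInnerSelf_apply, hx_split, hinner,
      RCLike.re_to_complex, Complex.ofReal_re]
    -- scalar inequality
    have hwpq : w = (τ : ℂ) * p + (u : ℂ) * q := by
      rw [hw, hv_def, inner_add_left, inner_smul_left, inner_smul_left, Complex.conj_ofReal,
        Complex.conj_ofReal, ← hp, ← hq]
    set ap : ℝ := ‖p‖ with hap
    set aq : ℝ := ‖q‖ with haq
    have hap0 : 0 ≤ ap := norm_nonneg p
    have haq0 : 0 ≤ aq := norm_nonneg q
    have habs : ‖w‖ ≤ τ * ap + u * aq := by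
      rw [hwpq]
      refine le_trans (norm_add_le _ _) ?_
      simp only [norm_mul, Complex.norm_real, Real.norm_eq_abs, abs_of_pos hτ0, abs_of_pos hu0, hap, haq, le_refl]
    have hw2 : ‖w‖ ^ 2 ≤ (τ * ap + u * aq)^2 :=
      pow_le_pow_left₀ (norm_nonneg w) habs 2
    have hbessel : ap^2 + aq^2 ≤ ‖x‖^2 := by
      have h := orthonormal_esingle.sum_inner_products_le (s := {0, 1}) x
      rw [Finset.sum_insert (by norm_num), Finset.sum_singleton] at h
      simpa [← he0, ← he1, ← hp, ← hq, hap, haq] using h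
    have hA0 : 0 ≤ d1 - σ * τ^2 := by
      rw [hτ2]
      nlinarith
    have hB0 : 0 ≤ lam - σ * u^2 := by
      rw [hu2, h1t]
      have hσu : σ * (ε * lam / σ) = ε * lam := by field_simp
      rw [hσu]
      nlinarith
    have hAB : (d1 - σ * τ^2) * (lam - σ * u^2) = (σ * τ * u)^2 := by
      have e1 : (σ * τ * u)^2 = σ^2 * τ^2 * u^2 := by ring
      rw [e1, hτ2, hu2, h1t, hd1_def]
      field_simp
      ring
    set α : ℝ := Real.sqrt (d1 - σ * τ^2) with hα
    set β : ℝ := Real.sqrt (lam - σ * u^2) with hβ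
    have hα2 : α^2 = d1 - σ * τ^2 := Real.sq_sqrt hA0
    have hβ2 : β^2 = lam - σ * u^2 := Real.sq_sqrt hB0
    have hαβ : α * β = σ * τ * u := by
      rw [hα, hβ, ← Real.sqrt_mul hA0, hAB]
      exact Real.sqrt_sq (by positivity)
    have hnp : Complex.normSq p = ap^2 := (Complex.sq_norm p).symm
    have hnw : Complex.normSq w = ‖w‖ ^ 2 := (Complex.sq_norm w).symm
    rw [hnp, hnw]
    have k1 : σ * ‖w‖^2 ≤ σ * (τ*ap + u*aq)^2 := mul_le_mul_of_nonneg_left hw2 hσ0.le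
    have k2 : lam * (ap^2 + aq^2) ≤ lam * ‖x‖^2 := mul_le_mul_of_nonneg_left hbessel hlam.le
    have k3 : 0 ≤ (α*ap - β*aq)^2 := sq_nonneg _
    have k4 : (α*ap - β*aq)^2
        = (d1 - σ*τ^2)*ap^2 + (lam - σ*u^2)*aq^2 - 2*(σ*τ*u)*(ap*aq) := by
      have e2 : (α*ap - β*aq)^2 = α^2*ap^2 + β^2*aq^2 - 2*(α*β)*(ap*aq) := by ring
      rw [e2, hα2, hβ2, hαβ]
    have k5 : σ * (τ*ap + u*aq)^2
        = σ*τ^2*ap^2 + 2*(σ*τ*u)*(ap*aq) + σ*u^2*aq^2 := by ring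
    linarith [k1, k2, k3]
  -- norm bound
  have hVnorm : ‖V‖ ≤ b := by
    have h1 := norm_smul_le lam (1 : ellTwo →L[ℂ] ellTwo)
    have h2 := norm_smul_le (d1 - lam) Q
    have h3 : ‖(1 : ellTwo →L[ℂ] ellTwo)‖ ≤ 1 := ContinuousLinearMap.norm_id_le
    have h4 : ‖Q‖ ≤ 1 := norm_rk_le_one e0 (norm_esingle 0)
    have h5 : ‖V‖ ≤ ‖lam • (1 : ellTwo →L[ℂ] ellTwo)‖ + ‖(d1 - lam) • Q‖ := by
      rw [hV]; exact norm_add_le _ _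
    rw [Real.norm_eq_abs, abs_of_pos hlam] at h1
    rw [Real.norm_eq_abs, abs_of_pos (by linarith : (0:ℝ) < d1 - lam)] at h2
    have h6 := mul_le_mul_of_nonneg_left h3 hlam.le
    have h7 := mul_le_mul_of_nonneg_left h4 (by linarith : (0:ℝ) ≤ d1 - lam)
    linarith
  -- spectra
  have hQQx : ∀ y : ellTwo, Q (Q y) = Q y := fun y => by
    conv_lhs => rw [show Q (Q y) = (Q * Q) y from rfl, hQQ]
  have hPPx : ∀ y : ellTwo, P (P y) = P y := fun y => by
    conv_lhs => rw [show P (P y) = (P * P) y from rfl, hPP]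
  have hspecU : spectrum ℝ U ⊆ {0, σ} := by
    apply spec_quad
    refine ContinuousLinearMap.ext fun x => ?_
    simp only [ContinuousLinearMap.sub_apply, ContinuousLinearMap.add_apply,
      ContinuousLinearMap.smul_apply, ContinuousLinearMap.one_apply,
      ContinuousLinearMap.mul_apply, ContinuousLinearMap.zero_apply]
    have hUx : ∀ y : ellTwo, U y = σ • P y := fun y => by rw [hU]; rfl
    rw [hUx x, hUx, ContinuousLinearMap.map_smul_of_tower, hPPx]
    module
  have hspecV : spectrum ℝ V ⊆ {lam, d1} := by
    apply spec_quad
    refine ContinuousLinearMap.ext fun x => ?_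
    simp only [ContinuousLinearMap.sub_apply, ContinuousLinearMap.add_apply,
      ContinuousLinearMap.smul_apply, ContinuousLinearMap.one_apply,
      ContinuousLinearMap.mul_apply, ContinuousLinearMap.zero_apply]
    have hVx : ∀ y : ellTwo, V y = lam • y + (d1 - lam) • Q y := fun y => by rw [hV]; rfl
    rw [hVx x, map_add, ContinuousLinearMap.map_smul_of_tower,
      ContinuousLinearMap.map_smul_of_tower, hVx x, hVx (Q x), hQQx]
    module
  -- cfc computations
  have hcfcU : cfc ψ U = (ψ σ / σ) • U := by
    have hEq : (spectrum ℝ U).EqOn ψ (fun x => (ψ σ / σ) * x) := by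
      intro x hx
      have hx2 := hspecU hx
      simp only [Set.mem_insert_iff, Set.mem_singleton_iff] at hx2
      rcases hx2 with rfl | h
      · simp [hψ0]
      · rw [h]
        show ψ σ = ψ σ / σ * σ
        field_simp
    rw [cfc_congr hEq, cfc_const_mul_id _ U hUsa]
  set m : ℝ := (ψ d1 - ψ lam) / (d1 - lam) with hm
  have hcfcV : cfc ψ V = (ψ lam - m * lam) • (1 : ellTwo →L[ℂ] ellTwo) + m • V := by
    have hEq : (spectrum ℝ V).EqOn ψ (fun x => (ψ lam - m * lam) + m * x) := by
      intro x hx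
      have hx2 := hspecV hx
      simp only [Set.mem_insert_iff, Set.mem_singleton_iff] at hx2
      rcases hx2 with h | h
      · rw [h]
        show ψ lam = (ψ lam - m * lam) + m * lam
        ring
      · rw [h]
        show ψ d1 = (ψ lam - m * lam) + m * d1
        rw [hm]
        field_simp [sub_ne_zero.mpr hd1lam.ne']
        ring
    rw [cfc_congr hEq, cfc_const_add _ _ _ (by fun_prop) hVsa, cfc_const_mul_id _ V hVsa,
      Algebra.algebraMap_eq_smul_one]
  -- apply operator monotonicity
  have hkey : (cfc ψ V - cfc ψ U).IsPositive := hopmono U V hUpos hVUpos hVnorm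
  have hform := hkey.inner_nonneg_left e1
  -- compute the quadratic form at e1
  have hQe1 : Q e1 = 0 := by
    rw [hQ, rk_apply, he01, zero_smul]
  have hVe1 : V e1 = lam • e1 := by
    rw [hV]
    simp [ContinuousLinearMap.add_apply, hQe1]
  have hPe1 : P e1 = (u : ℂ) • v := by
    rw [hP, rk_apply, hve1]
  have hUe1 : U e1 = σ • ((u : ℂ) • v) := by
    have h1 : (σ • P) e1 = σ • (P e1) := rfl
    rw [hU, h1, hPe1]
  have hcfcVe1 : (cfc ψ V) e1 = ((ψ lam : ℝ) : ℂ) • e1 := by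
    rw [hcfcV, ContinuousLinearMap.add_apply]
    have h1 : ((ψ lam - m * lam) • (1 : ellTwo →L[ℂ] ellTwo)) e1 = (ψ lam - m * lam) • e1 := rfl
    have h2 : (m • V) e1 = m • (V e1) := rfl
    rw [h1, h2, hVe1, smul_smul, ← add_smul,
      show ψ lam - m * lam + m * lam = ψ lam by ring, ellTwo_real_smul]
  have hcfcUe1 : (cfc ψ U) e1 = ((ψ σ / σ * σ * u : ℝ) : ℂ) • v := by
    have h1 : ((ψ σ / σ) • U) e1 = (ψ σ / σ) • (U e1) := rfl
    rw [hcfcU, h1, hUe1, ellTwo_real_smul, ellTwo_real_smul, smul_smul, smul_smul]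
    norm_cast
  have hinner_form : (inner ℂ ((cfc ψ V - cfc ψ U) e1) e1 : ℂ)
      = ((ψ lam - ψ σ * u^2 : ℝ) : ℂ) := by
    rw [ContinuousLinearMap.sub_apply, inner_sub_left, hcfcVe1, hcfcUe1, inner_smul_left,
      inner_smul_left, Complex.conj_ofReal, Complex.conj_ofReal, he11, hve1]
    norm_cast
    field_simp
  rw [hinner_form, Complex.zero_le_real] at hform
  -- conclude
  have hψσ : 0 < ψ σ := hψpos σ hσ0 hσb.le
  have hψlam : 0 < ψ lam := hψpos lam hlam hlamb.le
  rw [div_le_div_iff₀ hψlam hψσ]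
  have hu2' : σ * u^2 = ε * lam := by
    rw [hu2, h1t]
    field_simp
  nlinarith [mul_le_mul_of_nonneg_left hform hσ0.le, hu2', hψσ.le,
    mul_le_mul_of_nonneg_left (le_of_eq hu2') hψσ.le,
    mul_le_mul_of_nonneg_left (ge_of_eq hu2') hψσ.le]
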